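/- Let λ_max ≥ λ₀ > λ > 0, set d = m(λ₀ − λ)/(r·‖Px̄*‖₂), let j ∈ {1,…,p} with Px̄^j ≠ 0, let ξ ∈ {+1, −1}, and set x̄ = −ξ·x̄^j. If ⟨Px̄, Px̄*⟩/(‖Px̄‖₂·‖Px̄*‖₂) < d, then max_{θ ∈ A} ⟨θ, ξ·x̄^j⟩ = r·‖Px̄ + u₂*·Px̄*‖₂ − u₂*·m(λ₀ − λ) − ⟨θ₀, x̄⟩, where u₂* = (−a₁ + √Δ)/(2a₂) with a₂ = ‖Px̄*‖₂⁴·(1 − d²), a₁ = 2·⟨Px̄, Px̄*⟩·‖Px̄*‖₂²·(1 − d²), a₀ = ⟨Px̄, Px̄*⟩² − d²·‖Px̄‖₂²·‖Px̄*‖₂², and Δ = a₁² − 4a₂a₀ = 4d²(1 − d²)·‖Px̄*‖₂⁴·(‖Px̄‖₂²·‖Px̄*‖₂² − ⟨Px̄, Px̄*⟩²). -/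

import Mathlib

/-- The dual objective `g(θ) = (1/m) Σ_i [θ_i log θ_i + (1−θ_i) log(1−θ_i)]`. -/
noncomputable def g (m : ℕ) (θ : Fin m → ℝ) : ℝ :=
  (1 / (m : ℝ)) * ∑ i, (θ i * Real.log (θ i) + (1 - θ i) * Real.log (1 - θ i))

/-- The gradient of `g`, componentwise `(1/m) log(θ_i/(1−θ_i))`. -/
noncomputable def gradg (m : ℕ) (θ : Fin m → ℝ) : Fin m → ℝ :=
  fun i => (1 / (m : ℝ)) * Real.log (θ i / (1 - θ i))
/-- The dual feasible set `F_λ`: componentwise in `(0,1)`, `|⟨θ, x̄^j⟩| ≤ mλ` for all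
columns `x̄^j = X j`, and `⟨θ, b⟩ = 0`. -/
def Feas (m p : ℕ) (X : Fin p → Fin m → ℝ) (b : Fin m → ℝ) (lam : ℝ) :
    Set (Fin m → ℝ) :=
  {θ | (∀ i, 0 < θ i ∧ θ i < 1) ∧ (∀ j, |∑ i, θ i * X j i| ≤ (m : ℝ) * lam) ∧
    ∑ i, θ i * b i = 0}
set_option maxHeartbeats 2000000

open scoped Classical in
/-- `m⁺ = #{i : b_i = 1}`. -/
noncomputable def mPlus (m : ℕ) (b : Fin m → ℝ) : ℕ :=
  (Finset.univ.filter (fun i => b i = 1)).card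

open scoped Classical in
/-- `m⁻ = #{i : b_i = −1}`. -/
noncomputable def mMinus (m : ℕ) (b : Fin m → ℝ) : ℕ :=
  (Finset.univ.filter (fun i => b i = -1)).card

open scoped Classical in
/-- `θ_max`, with `(θ_max)_i = m⁻/m` if `b_i = 1` and `m⁺/m` if `b_i = −1`. -/
noncomputable def thetaMax (m : ℕ) (b : Fin m → ℝ) : Fin m → ℝ :=
  fun i => if b i = 1 then (mMinus m b : ℝ) / m else (mPlus m b : ℝ) / m

/-- `λ_max = (1/m) max_j |⟨θ_max, x̄^j⟩|`. -/
noncomputable def lamMax (m p : ℕ) (X : Fin p → Fin m → ℝ) (b : Fin m → ℝ) : ℝ :=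
  (1 / (m : ℝ)) * ⨆ j : Fin p, |∑ i, thetaMax m b i * X j i|
/-- `P`, the orthogonal projection onto the orthogonal complement of `b`:
`Pv = v − (⟨v,b⟩/‖b‖₂²) b`. -/
noncomputable def Pb (m : ℕ) (b : Fin m → ℝ) (v : Fin m → ℝ) : Fin m → ℝ :=
  fun i => v i - ((∑ k, v k * b k) / (∑ k, (b k) ^ 2)) * b i


section SloresHelpers

open Finset

lemma sum_sq_pos_of_ne_zero {m : ℕ} {v : Fin m → ℝ} (hv : v ≠ 0) : 0 < ∑ i, (v i)^2 := by
  obtain ⟨i, hi⟩ : ∃ i, v i ≠ 0 := by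
    by_contra h; push_neg at h; exact hv (funext h)
  exact Finset.sum_pos' (fun j _ => sq_nonneg _) ⟨i, Finset.mem_univ i, by positivity⟩

lemma sum_sq_b {m : ℕ} {b : Fin m → ℝ} (hb : ∀ i, b i = 1 ∨ b i = -1) :
    ∑ k, (b k)^2 = (m : ℝ) := by
  have h : ∀ k, (b k)^2 = 1 := fun k => by rcases hb k with h|h <;> rw [h] <;> norm_num
  simp [h]

lemma sum_lin {m : ℕ} (f h : Fin m → ℝ) (a b' : ℝ) :
    ∑ i, (a * f i + b' * h i) = a * ∑ i, f i + b' * ∑ i, h i := by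
  rw [Finset.sum_add_distrib, Finset.mul_sum, Finset.mul_sum]

noncomputable def fent (x : ℝ) : ℝ := x * Real.log x + (1 - x) * Real.log (1 - x)
noncomputable def psi (x : ℝ) : ℝ := Real.log x - Real.log (1 - x) - 4 * x

lemma hasDerivAt_fent {x : ℝ} (hx : 0 < x) (hx1 : x < 1) :
    HasDerivAt fent (Real.log x - Real.log (1 - x)) x := by
  have h1 : HasDerivAt (fun y : ℝ => y * Real.log y) (Real.log x + 1) x :=
    Real.hasDerivAt_mul_log hx.ne'
  have h0 : HasDerivAt (fun y : ℝ => 1 - y) (-1 : ℝ) x := by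
    simpa using (hasDerivAt_id x).const_sub 1
  have h2 : HasDerivAt (fun y : ℝ => (1 - y) * Real.log (1 - y))
      ((Real.log (1 - x) + 1) * (-1)) x := by
    have := (Real.hasDerivAt_mul_log (x := 1 - x) (by linarith)).comp x h0
    exact this
  have := h1.add h2
  refine this.congr_deriv ?_
  ring

lemma hasDerivAt_psi {x : ℝ} (hx : 0 < x) (hx1 : x < 1) :
    HasDerivAt psi (x⁻¹ + (1 - x)⁻¹ - 4) x := by
  have h0 : HasDerivAt (fun y : ℝ => 1 - y) (-1 : ℝ) x := by
    simpa using (hasDerivAt_id x).const_sub 1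
  have h1 : HasDerivAt Real.log x⁻¹ x := Real.hasDerivAt_log hx.ne'
  have h2 : HasDerivAt (fun y : ℝ => Real.log (1 - y)) ((1 - x)⁻¹ * (-1)) x :=
    (Real.hasDerivAt_log (x := 1 - x) (by linarith)).comp x h0
  have h3 : HasDerivAt (fun y : ℝ => 4 * y) (4 : ℝ) x := by
    simpa using (hasDerivAt_id x).const_mul 4
  have := (h1.sub h2).sub h3
  refine this.congr_deriv ?_
  ring

lemma psi_deriv_pos {x : ℝ} (hx : 0 < x) (hx1 : x < 1) (hne : x ≠ 1/2) :
    0 < x⁻¹ + (1 - x)⁻¹ - 4 := by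
  have h1 : (0:ℝ) < 1 - x := by linarith
  have h2 : (1 - 2*x) ≠ 0 := by intro h; apply hne; linarith
  have h3 : (0:ℝ) < (1 - 2*x)^2 := by positivity
  have key : x⁻¹ + (1 - x)⁻¹ - 4 = (1 - 2*x)^2 / (x * (1 - x)) := by
    field_simp
    ring
  rw [key]
  positivity

lemma psi_strictMonoOn : StrictMonoOn psi (Set.Ioo (0:ℝ) 1) := by
  have hc : ∀ s : Set ℝ, s ⊆ Set.Ioo (0:ℝ) 1 → ContinuousOn psi s := by
    intro s hs x hx
    exact ((hasDerivAt_psi (hs hx).1 (hs hx).2).continuousAt).continuousWithinAt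
  have hsub1 : Set.Ioc (0:ℝ) (1/2) ⊆ Set.Ioo (0:ℝ) 1 := fun x hx => ⟨hx.1, by
    have := hx.2; linarith⟩
  have hsub2 : Set.Ico (1/2 : ℝ) 1 ⊆ Set.Ioo (0:ℝ) 1 := fun x hx => ⟨by
    have := hx.1; linarith, hx.2⟩
  have hder : ∀ x ∈ Set.Ioo (0:ℝ) 1, x ≠ 1/2 → 0 < deriv psi x := by
    intro x hx hne
    rw [(hasDerivAt_psi hx.1 hx.2).deriv]
    exact psi_deriv_pos hx.1 hx.2 hne
  have m1 : StrictMonoOn psi (Set.Ioc (0:ℝ) (1/2)) := by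
    apply strictMonoOn_of_deriv_pos (convex_Ioc _ _) (hc _ hsub1)
    intro x hx
    rw [interior_Ioc] at hx
    exact hder x (hsub1 (Set.Ioo_subset_Ioc_self hx)) (ne_of_lt hx.2)
  have m2 : StrictMonoOn psi (Set.Ico (1/2:ℝ) 1) := by
    apply strictMonoOn_of_deriv_pos (convex_Ico _ _) (hc _ hsub2)
    intro x hx
    rw [interior_Ico] at hx
    exact hder x (hsub2 (Set.Ioo_subset_Ico_self hx)) (ne_of_gt hx.1)
  intro x hx y hy hxy
  rcases le_or_gt y (1/2) with h | h
  · exact m1 ⟨hx.1, by linarith⟩ ⟨hy.1, h⟩ hxy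
  · rcases le_or_gt (1/2) x with h' | h'
    · exact m2 ⟨h', hx.2⟩ ⟨by linarith, hy.2⟩ hxy
    · calc psi x < psi (1/2) := m1 ⟨hx.1, h'.le⟩ ⟨by norm_num, le_refl _⟩ h'
        _ < psi y := m2 ⟨le_refl _, by norm_num⟩ ⟨h.le, hy.2⟩ h

lemma bregman_strict {t s : ℝ} (ht0 : 0 < t) (ht1 : t < 1) (hs0 : 0 < s) (hs1 : s < 1)
    (hst : s ≠ t) :
    fent t + (Real.log t - Real.log (1 - t)) * (s - t) + 2 * (s - t)^2 < fent s := by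
  set F : ℝ → ℝ := fun x => fent x - 2 * x^2 - psi t * x with hF
  have hderF : ∀ x ∈ Set.Ioo (0:ℝ) 1, HasDerivAt F (psi x - psi t) x := by
    intro x hx
    have h1 := hasDerivAt_fent hx.1 hx.2
    have h2 : HasDerivAt (fun y : ℝ => 2 * y^2) (2 * (2 * x)) x := by
      simpa using (hasDerivAt_pow 2 x).const_mul (2:ℝ)
    have h3 : HasDerivAt (fun y : ℝ => psi t * y) (psi t) x := by
      simpa using (hasDerivAt_id x).const_mul (psi t)
    have := (h1.sub h2).sub h3
    refine this.congr_deriv ?_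
    simp only [psi]
    ring
  have hcF : ∀ u : Set ℝ, u ⊆ Set.Ioo (0:ℝ) 1 → ContinuousOn F u := fun u hu x hx =>
    ((hderF x (hu hx)).continuousAt).continuousWithinAt
  have ht : t ∈ Set.Ioo (0:ℝ) 1 := ⟨ht0, ht1⟩
  have hs : s ∈ Set.Ioo (0:ℝ) 1 := ⟨hs0, hs1⟩
  have key : F t < F s := by
    rcases lt_or_gt_of_ne hst with hlt | hgt
    · have hsub : Set.Icc s t ⊆ Set.Ioo (0:ℝ) 1 := fun x hx => ⟨lt_of_lt_of_le hs0 hx.1,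
        lt_of_le_of_lt hx.2 ht1⟩
      have : StrictAntiOn F (Set.Icc s t) := by
        apply strictAntiOn_of_deriv_neg (convex_Icc _ _) (hcF _ hsub)
        intro x hx
        rw [interior_Icc] at hx
        have hxm : x ∈ Set.Ioo (0:ℝ) 1 := hsub (Set.Ioo_subset_Icc_self hx)
        rw [(hderF x hxm).deriv]
        have : psi x < psi t := psi_strictMonoOn hxm ht hx.2
        linarith
      exact this (Set.left_mem_Icc.2 hlt.le) (Set.right_mem_Icc.2 hlt.le) hlt
    · have hsub : Set.Icc t s ⊆ Set.Ioo (0:ℝ) 1 := fun x hx => ⟨lt_of_lt_of_le ht0 hx.1,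
        lt_of_le_of_lt hx.2 hs1⟩
      have : StrictMonoOn F (Set.Icc t s) := by
        apply strictMonoOn_of_deriv_pos (convex_Icc _ _) (hcF _ hsub)
        intro x hx
        rw [interior_Icc] at hx
        have hxm : x ∈ Set.Ioo (0:ℝ) 1 := hsub (Set.Ioo_subset_Icc_self hx)
        rw [(hderF x hxm).deriv]
        have : psi t < psi x := psi_strictMonoOn ht hxm hx.1
        linarith
      exact this (Set.left_mem_Icc.2 hgt.le) (Set.right_mem_Icc.2 hgt.le) hgt
  have expand : F s - F t
      = fent s - (fent t + (Real.log t - Real.log (1 - t)) * (s - t) + 2 * (s - t)^2) := by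
    simp only [hF, psi]
    ring
  linarith [key, expand.ge, expand.le]

end SloresHelpers

section SloresPb

lemma pb_dot_b {m : ℕ} (hm : 1 ≤ m) {b : Fin m → ℝ} (hb : ∀ i, b i = 1 ∨ b i = -1)
    (v : Fin m → ℝ) : ∑ i, Pb m b v i * b i = 0 := by
  have hsb : ∑ k, (b k)^2 = (m:ℝ) := sum_sq_b hb
  have hm0 : (m:ℝ) ≠ 0 := Nat.cast_ne_zero.2 (by omega)
  have h : ∀ i, Pb m b v i * b i
      = v i * b i - ((∑ k, v k * b k) / (m:ℝ)) * (b i)^2 := by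
    intro i; simp only [Pb, hsb]; ring
  rw [Finset.sum_congr rfl (fun i _ => h i), Finset.sum_sub_distrib, ← Finset.mul_sum, hsb]
  field_simp
  ring

lemma dot_pb {m : ℕ} {b w : Fin m → ℝ} (hw : ∑ i, w i * b i = 0) (v : Fin m → ℝ) :
    ∑ i, w i * Pb m b v i = ∑ i, w i * v i := by
  have h : ∀ i, w i * Pb m b v i
      = w i * v i - ((∑ k, v k * b k) / (∑ k, (b k)^2)) * (w i * b i) := by
    intro i; simp only [Pb]; ring
  rw [Finset.sum_congr rfl (fun i _ => h i), Finset.sum_sub_distrib, ← Finset.mul_sum, hw]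
  ring

lemma pb_smul {m : ℕ} (b : Fin m → ℝ) (a : ℝ) (v : Fin m → ℝ) :
    Pb m b (fun i => a * v i) = fun i => a * Pb m b v i := by
  funext i
  have h : ∑ k, (a * v k) * b k = a * ∑ k, v k * b k := by
    rw [Finset.mul_sum]; exact Finset.sum_congr rfl (fun k _ => by ring)
  simp only [Pb, h]; ring

lemma r_sq_gt' {m : ℕ} (hm : 1 ≤ m) {lam lam₀ r : ℝ} (hlam : 0 < lam) (hll : lam < lam₀)
    {θ₀ : Fin m → ℝ} (hθ : ∀ i, 0 < θ₀ i ∧ θ₀ i < 1)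
    (hr : r = Real.sqrt (((m : ℝ) / 2) * (g m (fun i => (lam / lam₀) * θ₀ i) - g m θ₀
      + (1 - lam / lam₀) * ∑ i, gradg m θ₀ i * θ₀ i))) :
    ∑ i, ((lam / lam₀) * θ₀ i - θ₀ i)^2 < r^2 := by
  have hl0 : 0 < lam₀ := lt_trans hlam hll
  have hc1 : lam / lam₀ < 1 := (div_lt_one hl0).2 hll
  have hc0 : 0 < lam / lam₀ := div_pos hlam hl0
  have hm0 : (m:ℝ) ≠ 0 := Nat.cast_ne_zero.2 (by omega)
  set E := ((m : ℝ) / 2) * (g m (fun i => (lam / lam₀) * θ₀ i) - g m θ₀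
      + (1 - lam / lam₀) * ∑ i, gradg m θ₀ i * θ₀ i) with hE
  have hlog : ∀ i, Real.log (θ₀ i / (1 - θ₀ i))
      = Real.log (θ₀ i) - Real.log (1 - θ₀ i) := fun i =>
    Real.log_div (ne_of_gt (hθ i).1)
      (ne_of_gt (by linarith [(hθ i).2] : (0:ℝ) < 1 - θ₀ i))
  have hEeq : E = (1/2) * ∑ i, (fent ((lam/lam₀) * θ₀ i) - fent (θ₀ i)
      - (Real.log (θ₀ i) - Real.log (1 - θ₀ i)) * ((lam/lam₀) * θ₀ i - θ₀ i)) := by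
    have h1 : ∑ i, gradg m θ₀ i * θ₀ i
        = (1/(m:ℝ)) * ∑ i, (Real.log (θ₀ i) - Real.log (1 - θ₀ i)) * θ₀ i := by
      rw [Finset.mul_sum]
      exact Finset.sum_congr rfl fun i _ => by simp only [gradg, hlog i]; ring
    have h2 : ∑ i, (fent ((lam/lam₀) * θ₀ i) - fent (θ₀ i)
        - (Real.log (θ₀ i) - Real.log (1 - θ₀ i)) * ((lam/lam₀) * θ₀ i - θ₀ i))
        = ∑ i, fent ((lam/lam₀) * θ₀ i) - ∑ i, fent (θ₀ i)
          - (lam/lam₀ - 1) * ∑ i, ((Real.log (θ₀ i) - Real.log (1 - θ₀ i)) * θ₀ i) := by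
      rw [Finset.sum_sub_distrib, Finset.sum_sub_distrib, Finset.mul_sum]
      congr 1
      exact Finset.sum_congr rfl fun i _ => by ring
    rw [hE, h1, h2]
    simp only [g, fent]
    field_simp
    ring
  haveI : Nonempty (Fin m) := ⟨⟨0, by omega⟩⟩
  have hsum : ∑ i, 2 * ((lam/lam₀) * θ₀ i - θ₀ i)^2
      < ∑ i, (fent ((lam/lam₀) * θ₀ i) - fent (θ₀ i)
        - (Real.log (θ₀ i) - Real.log (1 - θ₀ i)) * ((lam/lam₀) * θ₀ i - θ₀ i)) := by
    apply Finset.sum_lt_sum_of_nonempty Finset.univ_nonempty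
    intro i _
    obtain ⟨h0, h1'⟩ := hθ i
    have hbs := bregman_strict (t := θ₀ i) (s := (lam/lam₀) * θ₀ i) h0 h1'
      (by positivity) (by nlinarith) (by intro h; nlinarith)
    linarith
  have h2s : ∑ i, 2 * ((lam/lam₀) * θ₀ i - θ₀ i)^2
      = 2 * ∑ i, ((lam/lam₀) * θ₀ i - θ₀ i)^2 := by rw [Finset.mul_sum]
  have hlt : ∑ i, ((lam/lam₀) * θ₀ i - θ₀ i)^2 < E := by
    rw [hEeq]; linarith
  have hEnn : 0 ≤ E := le_trans (by positivity) hlt.le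
  have hre : r^2 = E := by rw [hr]; exact Real.sq_sqrt hEnn
  linarith

end SloresPb

/-- Theorem 8(b): with `d = m(λ₀ − λ)/(r‖Px̄*‖₂)`, if
`⟨Px̄, Px̄*⟩/(‖Px̄‖₂‖Px̄*‖₂) < d`, then
`max_{θ ∈ A} ⟨θ, ξx̄^j⟩ = r‖Px̄ + u₂*Px̄*‖₂ − u₂*m(λ₀ − λ) − ⟨θ₀, x̄⟩`, where
`u₂* = (−a₁ + √Δ)/(2a₂)` with the stated coefficients, and
`Δ = a₁² − 4a₂a₀ = 4d²(1 − d²)‖Px̄*‖₂⁴(‖Px̄‖₂²‖Px̄*‖₂² − ⟨Px̄, Px̄*⟩²)`. -/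
theorem slores_upper_bound_case_b
 (m p : ℕ) (hm : 1 ≤ m) (hp : 1 ≤ p)
    (X : Fin p → Fin m → ℝ) (b : Fin m → ℝ) (hb : ∀ i, b i = 1 ∨ b i = -1)
    (hmp : 1 ≤ mPlus m b) (hmm : 1 ≤ mMinus m b) (hlmax : 0 < lamMax m p X b)
    (lam lam₀ : ℝ) (hlam : 0 < lam) (hll : lam < lam₀) (hle : lam₀ ≤ lamMax m p X b)
    (θ₀ : Fin m → ℝ)
    (hθ₀ : θ₀ ∈ Feas m p X b lam₀ ∧ ∀ θ ∈ Feas m p X b lam₀, g m θ₀ ≤ g m θ)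
    (r : ℝ)
    (hr : r = Real.sqrt (((m : ℝ) / 2) * (g m (fun i => (lam / lam₀) * θ₀ i) - g m θ₀
      + (1 - lam / lam₀) * ∑ i, gradg m θ₀ i * θ₀ i)))
    (j₀ : Fin p) (hj₀ : |∑ i, θ₀ i * X j₀ i| = (m : ℝ) * lam₀)
    (xstar : Fin m → ℝ)
    (hxstar : xstar = fun i => Real.sign (∑ k, θ₀ k * X j₀ k) * X j₀ i)
    (A : Set (Fin m → ℝ))
    (hA : A = {θ | ∑ i, (θ i - θ₀ i) ^ 2 ≤ r ^ 2 ∧ ∑ i, θ i * b i = 0 ∧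
      ∑ i, θ i * xstar i ≤ (m : ℝ) * lam})
    (hPxs : Pb m b xstar ≠ 0)
    (j : Fin p) (hPj : Pb m b (X j) ≠ 0)
    (ξ : ℝ) (hξ : ξ = 1 ∨ ξ = -1)
    (xbar : Fin m → ℝ) (hxbar : xbar = fun i => -ξ * X j i)
    (hr0 : 0 < r)
    (d : ℝ) (hd : d = (m : ℝ) * (lam₀ - lam) / (r * Real.sqrt (∑ i, (Pb m b xstar i) ^ 2)))
    (hcos : (∑ i, Pb m b xbar i * Pb m b xstar i) /
        (Real.sqrt (∑ i, (Pb m b xbar i) ^ 2) * Real.sqrt (∑ i, (Pb m b xstar i) ^ 2)) < d)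
    (a₂ a₁ a₀ Δ u₂s : ℝ)
    (ha₂ : a₂ = (∑ i, (Pb m b xstar i) ^ 2) ^ 2 * (1 - d ^ 2))
    (ha₁ : a₁ = 2 * (∑ i, Pb m b xbar i * Pb m b xstar i) *
      (∑ i, (Pb m b xstar i) ^ 2) * (1 - d ^ 2))
    (ha₀ : a₀ = (∑ i, Pb m b xbar i * Pb m b xstar i) ^ 2
      - d ^ 2 * (∑ i, (Pb m b xbar i) ^ 2) * (∑ i, (Pb m b xstar i) ^ 2))
    (hΔ : Δ = a₁ ^ 2 - 4 * a₂ * a₀)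
    (hu : u₂s = (-a₁ + Real.sqrt Δ) / (2 * a₂)) :
    Δ = 4 * d ^ 2 * (1 - d ^ 2) * (∑ i, (Pb m b xstar i) ^ 2) ^ 2 *
      ((∑ i, (Pb m b xbar i) ^ 2) * (∑ i, (Pb m b xstar i) ^ 2)
        - (∑ i, Pb m b xbar i * Pb m b xstar i) ^ 2) ∧
    IsGreatest ((fun θ => ∑ i, θ i * (ξ * X j i)) '' A)
      (r * Real.sqrt (∑ i, (Pb m b xbar i + u₂s * Pb m b xstar i) ^ 2)
        - u₂s * ((m : ℝ) * (lam₀ - lam)) - ∑ i, θ₀ i * xbar i) := by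
  have hl0 : 0 < lam₀ := lt_trans hlam hll
  have hm0 : (m:ℝ) ≠ 0 := Nat.cast_ne_zero.2 (by omega)
  have hmR : (0:ℝ) < m := by exact_mod_cast Nat.pos_of_ne_zero (by omega)
  obtain ⟨⟨hC, hXc, hθb⟩, hmin⟩ := hθ₀
  set K := (m:ℝ) * (lam₀ - lam) with hKdef
  have hK : 0 < K := by rw [hKdef]; exact mul_pos hmR (by linarith)
  set Q := ∑ i, (Pb m b xstar i)^2 with hQdef
  set S := ∑ i, (Pb m b xbar i)^2 with hSdef
  set cc := ∑ i, Pb m b xbar i * Pb m b xstar i with hccdef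
  have hQpos : 0 < Q := by rw [hQdef]; exact sum_sq_pos_of_ne_zero hPxs
  have hξ0 : ξ ≠ 0 := by rcases hξ with h' | h' <;> rw [h'] <;> norm_num
  have hPxbar : Pb m b xbar = fun i => -ξ * Pb m b (X j) i := by
    rw [hxbar]; exact pb_smul b (-ξ) (X j)
  have hPxbne : Pb m b xbar ≠ 0 := by
    rw [hPxbar]
    intro h
    apply hPj
    funext i
    have h2 := congrFun h i
    simp only [Pi.zero_apply] at h2 ⊢
    rcases mul_eq_zero.1 h2 with h3 | h3
    · exact absurd (neg_eq_zero.1 h3) hξ0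
    · exact h3
  have hSpos : 0 < S := by rw [hSdef]; exact sum_sq_pos_of_ne_zero hPxbne
  set sx := Real.sqrt Q with hsxdef
  set sb := Real.sqrt S with hsbdef
  have hsx : 0 < sx := Real.sqrt_pos.2 hQpos
  have hsx2 : sx^2 = Q := Real.sq_sqrt hQpos.le
  have hsb : 0 < sb := Real.sqrt_pos.2 hSpos
  have hsb2 : sb^2 = S := Real.sq_sqrt hSpos.le
  have hdrx : d * (r * sx) = K := by rw [hd]; exact div_mul_cancel₀ K (mul_pos hr0 hsx).ne'
  have hd0 : 0 < d := by rw [hd]; exact div_pos hK (mul_pos hr0 hsx)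
  have hstar : ∑ i, θ₀ i * xstar i = (m:ℝ) * lam₀ := by
    have hSne : (∑ k, θ₀ k * X j₀ k) ≠ 0 := by
      intro h
      rw [h, abs_zero] at hj₀
      linarith [mul_pos hmR hl0]
    have hrw : ∑ i, θ₀ i * xstar i
        = Real.sign (∑ k, θ₀ k * X j₀ k) * ∑ k, θ₀ k * X j₀ k := by
      rw [hxstar, Finset.mul_sum]
      exact Finset.sum_congr rfl fun i _ => by ring
    rw [hrw, ← hj₀]
    rcases hSne.lt_or_gt with h | h
    · rw [Real.sign_of_neg h, abs_of_neg h]; ring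
    · rw [Real.sign_of_pos h, abs_of_pos h]; ring
  have hd1 : d < 1 := by
    have hR2 := r_sq_gt' hm hlam hll hC hr
    have hΔb : ∑ i, ((lam/lam₀) * θ₀ i - θ₀ i) * b i = 0 := by
      have e : ∀ i, ((lam/lam₀) * θ₀ i - θ₀ i) * b i
          = (lam/lam₀ - 1) * (θ₀ i * b i) := fun i => by ring
      rw [Finset.sum_congr rfl fun i _ => e i, ← Finset.mul_sum, hθb, mul_zero]
    have hΔx : ∑ i, ((lam/lam₀) * θ₀ i - θ₀ i) * Pb m b xstar i = -K := by
      rw [dot_pb hΔb]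
      have h1 : ∑ i, ((lam/lam₀) * θ₀ i - θ₀ i) * xstar i
          = (lam/lam₀ - 1) * ∑ i, θ₀ i * xstar i := by
        rw [Finset.mul_sum]; exact Finset.sum_congr rfl fun i _ => by ring
      rw [h1, hstar, hKdef]
      field_simp
      ring
    have hcs : (∑ i, (((lam/lam₀) * θ₀ i - θ₀ i) * Pb m b xstar i))^2
        ≤ (∑ i, ((lam/lam₀) * θ₀ i - θ₀ i)^2) * ∑ i, (Pb m b xstar i)^2 :=
      Finset.sum_mul_sq_le_sq_mul_sq Finset.univ _ _
    rw [hΔx, ← hQdef] at hcs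
    have h1 : K^2 < r^2 * Q := by
      calc K^2 = (-K)^2 := by ring
        _ ≤ (∑ i, ((lam/lam₀) * θ₀ i - θ₀ i)^2) * Q := hcs
        _ < r^2 * Q := mul_lt_mul_of_pos_right hR2 hQpos
    have h2 : K < r * sx := by
      refine lt_of_pow_lt_pow_left₀ 2 (mul_pos hr0 hsx).le ?_
      calc K^2 < r^2 * Q := h1
        _ = (r*sx)^2 := by rw [← hsx2]; ring
    rw [hd, div_lt_one (mul_pos hr0 hsx)]
    exact h2
  have hd2 : d^2 < 1 := by
    have h := mul_lt_mul' hd1.le hd1 hd0.le one_pos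
    calc d^2 = d*d := by ring
      _ < 1*1 := h
      _ = 1 := by ring
  have ha₂pos : 0 < a₂ := by rw [ha₂]; exact mul_pos (pow_pos hQpos 2) (by linarith)
  have hΔeq : Δ = 4*d^2*(1-d^2)*Q^2*(S*Q - cc^2) := by rw [hΔ, ha₁, ha₂, ha₀]; ring
  have hCS : cc^2 ≤ S * Q := by
    rw [hccdef, hSdef, hQdef]
    exact Finset.sum_mul_sq_le_sq_mul_sq Finset.univ (Pb m b xbar) (Pb m b xstar)
  have hΔnn : 0 ≤ Δ := by
    rw [hΔeq]
    have h1d : (0:ℝ) ≤ 1 - d^2 := by linarith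
    have hco : 0 ≤ 4*d^2*(1-d^2)*Q^2 :=
      mul_nonneg (mul_nonneg (mul_nonneg (by norm_num) (sq_nonneg d)) h1d) (sq_nonneg Q)
    exact mul_nonneg hco (by linarith)
  have hsqΔ : Real.sqrt Δ ^ 2 = Δ := Real.sq_sqrt hΔnn
  have h2au : 2*a₂*u₂s + a₁ = Real.sqrt Δ := by
    rw [hu]
    field_simp
    ring
  have hroot : a₂*u₂s^2 + a₁*u₂s + a₀ = 0 := by
    have h3 : (2*a₂*u₂s + a₁)^2 = a₁^2 - 4*a₂*a₀ := by rw [h2au, hsqΔ, hΔ]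
    have h4 : 4*a₂*(a₂*u₂s^2 + a₁*u₂s + a₀) = 0 := by linear_combination h3
    have h5 : (4:ℝ)*a₂ ≠ 0 := ne_of_gt (by linarith)
    rcases mul_eq_zero.1 h4 with h6 | h6
    · exact absurd h6 h5
    · exact h6
  have hu2nn : 0 ≤ u₂s := by
    rw [hu]
    apply div_nonneg _ (by linarith)
    rcases le_or_gt a₁ 0 with hA | hA
    · have := Real.sqrt_nonneg Δ; linarith
    · have hcpos : 0 < cc := by
        rw [ha₁] at hA
        by_contra hle
        push_neg at hle
        have hQd : 0 < Q*(1-d^2) := mul_pos hQpos (by linarith)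
        have he : 2*cc*Q*(1-d^2) = (2*cc)*(Q*(1-d^2)) := by ring
        rw [he] at hA
        have := mul_nonpos_of_nonpos_of_nonneg (by linarith : 2*cc ≤ 0) hQd.le
        linarith
      have hccd : cc < d * (sb * sx) := by
        have h7 := hcos
        rwa [div_lt_iff₀ (mul_pos hsb hsx)] at h7
      have ha0neg : a₀ < 0 := by
        rw [ha₀]
        have hy : 0 < d*(sb*sx) := mul_pos hd0 (mul_pos hsb hsx)
        have h1 : cc^2 < (d*(sb*sx))^2 := by
          have h2 := mul_lt_mul' hccd.le hccd hcpos.le hy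
          calc cc^2 = cc*cc := by ring
            _ < (d*(sb*sx))*(d*(sb*sx)) := h2
            _ = (d*(sb*sx))^2 := by ring
        have h2 : (d*(sb*sx))^2 = d^2*S*Q := by
          calc (d*(sb*sx))^2 = d^2*(sb^2*sx^2) := by ring
            _ = d^2*S*Q := by rw [hsb2, hsx2]; ring
        linarith
      have h8 : a₁^2 ≤ Δ := by
        rw [hΔ]
        have := mul_nonneg (by linarith : (0:ℝ) ≤ 4*a₂) (by linarith : (0:ℝ) ≤ -a₀)
        linarith
      have h9 : a₁ ≤ Real.sqrt Δ :=
        calc a₁ = Real.sqrt (a₁^2) := (Real.sqrt_sq hA.le).symm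
          _ ≤ Real.sqrt Δ := Real.sqrt_le_sqrt h8
      linarith
  have hNsq : ∑ i, (Pb m b xbar i + u₂s * Pb m b xstar i)^2 = S + 2*u₂s*cc + u₂s^2*Q := by
    rw [hSdef, hccdef, hQdef, Finset.mul_sum, Finset.mul_sum,
      ← Finset.sum_add_distrib, ← Finset.sum_add_distrib]
    exact Finset.sum_congr rfl fun i _ => by ring
  have hNsumnn : 0 ≤ ∑ i, (Pb m b xbar i + u₂s * Pb m b xstar i)^2 :=
    Finset.sum_nonneg fun i _ => sq_nonneg _
  set N := Real.sqrt (∑ i, (Pb m b xbar i + u₂s * Pb m b xstar i)^2) with hNdef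
  have hNnn : 0 ≤ N := Real.sqrt_nonneg _
  have hN2 : N^2 = S + 2*u₂s*cc + u₂s^2*Q := by
    rw [hNdef, Real.sq_sqrt hNsumnn]
    exact hNsq
  have hkey : cc + u₂s * Q = d * sx * N := by
    have h7 : (cc + u₂s*Q) * (2*Q*(1-d^2)) = Real.sqrt Δ := by
      rw [← h2au, ha₁, ha₂]; ring
    have hpos7 : 0 < 2*Q*(1-d^2) := mul_pos (by linarith) (by linarith)
    have hL : 0 ≤ cc + u₂s*Q := by
      by_contra hneg
      push_neg at hneg
      have := mul_neg_of_neg_of_pos hneg hpos7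
      linarith [Real.sqrt_nonneg Δ, h7]
    have hroot' := hroot
    rw [ha₂, ha₁, ha₀] at hroot'
    have hsqeq : (cc + u₂s*Q)^2 = (d*sx*N)^2 := by
      have e1 : (d*sx*N)^2 = d^2*(sx^2*N^2) := by ring
      rw [e1, hsx2, hN2]
      linear_combination hroot'
    have hR : 0 ≤ d*sx*N := mul_nonneg (mul_nonneg hd0.le hsx.le) hNnn
    calc cc + u₂s*Q = Real.sqrt ((cc + u₂s*Q)^2) := (Real.sqrt_sq hL).symm
      _ = Real.sqrt ((d*sx*N)^2) := by rw [hsqeq]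
      _ = d*sx*N := Real.sqrt_sq hR
  have hPxsb : ∑ i, Pb m b xstar i * b i = 0 := pb_dot_b hm hb xstar
  have hPxbb : ∑ i, Pb m b xbar i * b i = 0 := pb_dot_b hm hb xbar
  have hwb : ∑ i, (Pb m b xbar i + u₂s * Pb m b xstar i) * b i = 0 := by
    have e : ∀ i, (Pb m b xbar i + u₂s * Pb m b xstar i) * b i
        = Pb m b xbar i * b i + u₂s * (Pb m b xstar i * b i) := fun i => by ring
    rw [Finset.sum_congr rfl fun i _ => e i, Finset.sum_add_distrib, ← Finset.mul_sum,
      hPxbb, hPxsb, mul_zero, add_zero]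
  have hwPxs : ∑ i, (Pb m b xbar i + u₂s * Pb m b xstar i) * xstar i = cc + u₂s * Q := by
    rw [← dot_pb hwb xstar, hccdef, hQdef, Finset.mul_sum, ← Finset.sum_add_distrib]
    exact Finset.sum_congr rfl fun i _ => by ring
  have hwPxb : ∑ i, (Pb m b xbar i + u₂s * Pb m b xstar i) * xbar i = S + u₂s * cc := by
    rw [← dot_pb hwb xbar, hSdef, hccdef, Finset.mul_sum, ← Finset.sum_add_distrib]
    exact Finset.sum_congr rfl fun i _ => by ring
  have hsumN : ∑ i, (Pb m b xbar i + u₂s * Pb m b xstar i)^2 = N^2 := by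
    rw [hNdef]; exact (Real.sq_sqrt hNsumnn).symm
  refine ⟨hΔeq, ?_, ?_⟩
  · -- attainment
    by_cases h0 : (∑ i, (Pb m b xbar i + u₂s * Pb m b xstar i)^2) = 0
    · have hN0 : N = 0 := by rw [hNdef, h0, Real.sqrt_zero]
      have hptw : ∀ i, Pb m b xbar i = -u₂s * Pb m b xstar i := by
        intro i
        have h1 := (Finset.sum_eq_zero_iff_of_nonneg (fun i _ => sq_nonneg _)).1 h0 i
          (Finset.mem_univ i)
        have h2 : Pb m b xbar i + u₂s * Pb m b xstar i = 0 := by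
          exact pow_eq_zero_iff (n := 2) (by norm_num) |>.1 h1
        linarith
      have hccQ : cc = -u₂s * Q := by
        rw [hccdef, hQdef, Finset.mul_sum]
        exact Finset.sum_congr rfl fun i _ => by rw [hptw i]; ring
      have hPxx : ∑ i, Pb m b xstar i * xstar i = Q := by
        rw [← dot_pb hPxsb xstar, hQdef]
        exact Finset.sum_congr rfl fun i _ => by ring
      have hPxbx : ∑ i, Pb m b xstar i * xbar i = cc := by
        rw [← dot_pb hPxsb xbar, hccdef]
        exact Finset.sum_congr rfl fun i _ => by ring
      refine ⟨fun i => θ₀ i - (K/Q) * Pb m b xstar i, ?_, ?_⟩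
      · rw [hA]
        simp only [Set.mem_setOf_eq]
        refine ⟨?_, ?_, ?_⟩
        · have e : ∀ i, ((θ₀ i - (K/Q) * Pb m b xstar i) - θ₀ i)^2
              = (K/Q)^2 * (Pb m b xstar i)^2 := fun i => by ring
          rw [Finset.sum_congr rfl fun i _ => e i, ← Finset.mul_sum, ← hQdef]
          have hK2 : K^2 = d^2*r^2*Q := by
            rw [← hdrx]
            calc (d*(r*sx))^2 = d^2*r^2*sx^2 := by ring
              _ = d^2*r^2*Q := by rw [hsx2]
          have e2 : (K/Q)^2*Q = d^2*r^2 := by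
            rw [div_pow, div_mul_eq_mul_div, div_eq_iff (pow_pos hQpos 2).ne', hK2]
            ring
          have e3 : 0 ≤ (1-d^2)*r^2 := mul_nonneg (by linarith) (sq_nonneg r)
          linarith
        · have e : ∀ i, (θ₀ i - (K/Q) * Pb m b xstar i) * b i
              = θ₀ i * b i - (K/Q) * (Pb m b xstar i * b i) := fun i => by ring
          rw [Finset.sum_congr rfl fun i _ => e i, Finset.sum_sub_distrib, ← Finset.mul_sum,
            hθb, hPxsb, mul_zero, sub_zero]
        · have e : ∀ i, (θ₀ i - (K/Q) * Pb m b xstar i) * xstar i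
              = θ₀ i * xstar i - (K/Q) * (Pb m b xstar i * xstar i) := fun i => by ring
          rw [Finset.sum_congr rfl fun i _ => e i, Finset.sum_sub_distrib, ← Finset.mul_sum,
            hstar, hPxx, div_mul_cancel₀ K hQpos.ne', hKdef]
          linarith
      · show ∑ i, (θ₀ i - (K/Q) * Pb m b xstar i) * (ξ * X j i)
            = r * N - u₂s * K - ∑ i, θ₀ i * xbar i
        rw [hN0, mul_zero, zero_sub]
        have e : ∀ i, (θ₀ i - (K/Q) * Pb m b xstar i) * (ξ * X j i)
            = -(θ₀ i * xbar i) + (K/Q) * (Pb m b xstar i * xbar i) := by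
          intro i; simp only [hxbar]; ring
        rw [Finset.sum_congr rfl fun i _ => e i, Finset.sum_add_distrib, ← Finset.mul_sum,
          Finset.sum_neg_distrib, hPxbx, hccQ]
        field_simp
        ring
    · have hNpos : 0 < N := Real.sqrt_pos.2 (lt_of_le_of_ne hNsumnn (Ne.symm h0))
      refine ⟨fun i => θ₀ i - (r/N) * (Pb m b xbar i + u₂s * Pb m b xstar i), ?_, ?_⟩
      · rw [hA]
        simp only [Set.mem_setOf_eq]
        refine ⟨?_, ?_, ?_⟩
        · have e : ∀ i, ((θ₀ i - (r/N) * (Pb m b xbar i + u₂s * Pb m b xstar i)) - θ₀ i)^2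
              = (r/N)^2 * (Pb m b xbar i + u₂s * Pb m b xstar i)^2 := fun i => by ring
          rw [Finset.sum_congr rfl fun i _ => e i, ← Finset.mul_sum, hsumN]
          have e2 : (r/N)^2 * N^2 = r^2 := by
            field_simp
          linarith [e2.le]
        · have e : ∀ i, (θ₀ i - (r/N) * (Pb m b xbar i + u₂s * Pb m b xstar i)) * b i
              = θ₀ i * b i - (r/N) * ((Pb m b xbar i + u₂s * Pb m b xstar i) * b i) :=
            fun i => by ring
          rw [Finset.sum_congr rfl fun i _ => e i, Finset.sum_sub_distrib, ← Finset.mul_sum,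
            hθb, hwb, mul_zero, sub_zero]
        · have e : ∀ i, (θ₀ i - (r/N) * (Pb m b xbar i + u₂s * Pb m b xstar i)) * xstar i
              = θ₀ i * xstar i - (r/N) * ((Pb m b xbar i + u₂s * Pb m b xstar i) * xstar i) :=
            fun i => by ring
          rw [Finset.sum_congr rfl fun i _ => e i, Finset.sum_sub_distrib, ← Finset.mul_sum,
            hstar, hwPxs, hkey]
          have h9 : (r/N)*(d*sx*N) = K := by
            rw [← hdrx]
            field_simp
          rw [h9, hKdef]
          linarith
      · show ∑ i, (θ₀ i - (r/N) * (Pb m b xbar i + u₂s * Pb m b xstar i)) * (ξ * X j i)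
            = r * N - u₂s * K - ∑ i, θ₀ i * xbar i
        have e : ∀ i, (θ₀ i - (r/N) * (Pb m b xbar i + u₂s * Pb m b xstar i)) * (ξ * X j i)
            = -(θ₀ i * xbar i)
              + (r/N) * ((Pb m b xbar i + u₂s * Pb m b xstar i) * xbar i) := by
          intro i; simp only [hxbar]; ring
        rw [Finset.sum_congr rfl fun i _ => e i, Finset.sum_add_distrib, ← Finset.mul_sum,
          Finset.sum_neg_distrib, hwPxb]
        have e2 : K*N = r*(cc + u₂s*Q) := by
          rw [← hdrx, hkey]; ring
        have e3 : r*(S + u₂s*cc) = (r*N - u₂s*K)*N := by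
          linear_combination (-r)*hN2 + u₂s*e2
        have e4 : (r/N)*(S+u₂s*cc) = r*N - u₂s*K := by
          rw [div_mul_eq_mul_div, e3, mul_div_assoc, div_self hNpos.ne', mul_one]
        rw [e4]
        ring
  · -- upper bound
    rintro y ⟨θ', hθ'A, rfl⟩
    rw [hA] at hθ'A
    obtain ⟨hball, hbz, hxs⟩ := hθ'A
    show ∑ i, θ' i * (ξ * X j i) ≤ r * N - u₂s * K - ∑ i, θ₀ i * xbar i
    have hηb : ∑ i, (θ' i - θ₀ i) * b i = 0 := by
      have e : ∀ i, (θ' i - θ₀ i) * b i = θ' i * b i - θ₀ i * b i := fun i => by ring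
      rw [Finset.sum_congr rfl fun i _ => e i, Finset.sum_sub_distrib, hbz, hθb, sub_zero]
    have hηx : ∑ i, (θ' i - θ₀ i) * xstar i ≤ -K := by
      have e : ∑ i, (θ' i - θ₀ i) * xstar i
          = (∑ i, θ' i * xstar i) - ∑ i, θ₀ i * xstar i := by
        rw [← Finset.sum_sub_distrib]
        exact Finset.sum_congr rfl fun i _ => by ring
      rw [e, hstar, hKdef]
      linarith [hxs]
    have hsplit : ∑ i, (θ' i - θ₀ i) * xbar i
        = (∑ i, (θ' i - θ₀ i) * (Pb m b xbar i + u₂s * Pb m b xstar i))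
          - u₂s * ∑ i, (θ' i - θ₀ i) * xstar i := by
      rw [← dot_pb hηb xbar, ← dot_pb hηb xstar, Finset.mul_sum, ← Finset.sum_sub_distrib]
      exact Finset.sum_congr rfl fun i _ => by ring
    have hcs2 : -(∑ i, (θ' i - θ₀ i) * (Pb m b xbar i + u₂s * Pb m b xstar i)) ≤ r * N := by
      have h1 : (∑ i, ((θ' i - θ₀ i) * (Pb m b xbar i + u₂s * Pb m b xstar i)))^2
          ≤ (∑ i, (θ' i - θ₀ i)^2) * ∑ i, (Pb m b xbar i + u₂s * Pb m b xstar i)^2 :=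
        Finset.sum_mul_sq_le_sq_mul_sq Finset.univ _ _
      rw [hsumN] at h1
      have h2 : (∑ i, ((θ' i - θ₀ i) * (Pb m b xbar i + u₂s * Pb m b xstar i)))^2
          ≤ (r*N)^2 := by
        calc (∑ i, ((θ' i - θ₀ i) * (Pb m b xbar i + u₂s * Pb m b xstar i)))^2
            ≤ (∑ i, (θ' i - θ₀ i)^2) * N^2 := h1
          _ ≤ r^2 * N^2 := mul_le_mul_of_nonneg_right hball (sq_nonneg N)
          _ = (r*N)^2 := by ring
      have h4 : |∑ i, ((θ' i - θ₀ i) * (Pb m b xbar i + u₂s * Pb m b xstar i))| ≤ r*N := by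
        have h5 := Real.sqrt_le_sqrt h2
        rwa [Real.sqrt_sq_eq_abs, Real.sqrt_sq (mul_nonneg hr0.le hNnn)] at h5
      linarith [neg_le_abs (∑ i, ((θ' i - θ₀ i) * (Pb m b xbar i + u₂s * Pb m b xstar i)))]
    have hobj : ∑ i, θ' i * (ξ * X j i)
        = -(∑ i, (θ' i - θ₀ i) * xbar i) - ∑ i, θ₀ i * xbar i := by
      have e : ∀ i, θ' i * (ξ * X j i)
          = -((θ' i - θ₀ i) * xbar i) - θ₀ i * xbar i := by
        intro i; simp only [hxbar]; ring
      rw [Finset.sum_congr rfl fun i _ => e i, Finset.sum_sub_distrib, Finset.sum_neg_distrib]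
    have hfin := mul_le_mul_of_nonneg_left hηx hu2nn
    rw [hobj, hsplit]
    linarith [hcs2, hfin]
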